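/- In the bounded forecasting game, let E be the event that x_n = p_n for infinitely many n. Then Q̲(E) = 0: for every K_0 < 1 there is a strategy of Reality that always announces x_n ≠ p_n and guarantees sup_n K_n < 1 against every Forecaster and every Skeptic keeping the capital nonnegative. -/
import Mathlib

open Filter Finset

/-- Capital process in the bounded forecasting game with initial capital `a`. -/
def cap (a : ℝ) (p M x : ℕ → ℝ) : ℕ → ℝ
  | 0 => a
  | n + 1 => cap a p M x n + M n * (x n - p n)

/-- Forecaster's moves are in `[0,1]`. -/
def ValidP (p : ℕ → ℝ) : Prop := ∀ n, p n ∈ Set.Icc (0 : ℝ) 1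

/-- In the bounded forecasting game Reality's moves are in `[0,1]`. -/
def ValidXb (x : ℕ → ℝ) : Prop := ∀ n, x n ∈ Set.Icc (0 : ℝ) 1

/-- A Reality strategy reads Forecaster's and Skeptic's moves up to round `n`. -/
def RAdapted (R : (ℕ → ℝ) → (ℕ → ℝ) → ℕ → ℝ) : Prop :=
  ∀ p p' M M' : ℕ → ℝ, ∀ n, (∀ k ≤ n, p k = p' k) → (∀ k ≤ n, M k = M' k) →
    R p M n = R p' M' n

/-- The set of initial capitals `a` for which some Reality strategy guarantees
the event and keeps the capital at most 1, against every Forecaster and every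
Skeptic keeping the capital nonnegative. -/
def QSetb (E : (ℕ → ℝ) → (ℕ → ℝ) → Prop) : Set ℝ :=
  {a | ∃ R, RAdapted R ∧ ∀ p M : ℕ → ℝ, ValidP p →
    ValidXb (R p M) ∧
    ((∀ n, 0 ≤ cap a p M (R p M) n) →
      (E p (R p M) ∧ ∀ n, cap a p M (R p M) n ≤ 1))}

noncomputable def UpperQb (E : (ℕ → ℝ) → (ℕ → ℝ) → Prop) : ℝ := sSup (QSetb E)

noncomputable def LowerQb (E : (ℕ → ℝ) → (ℕ → ℝ) → Prop) : ℝ :=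
  1 - UpperQb (fun p x => ¬ E p x)

/-- Reality's perturbation size at round `n`. -/
noncomputable def Rd (a : ℝ) (M : ℕ → ℝ) (n : ℕ) : ℝ :=
  min ((1 - a) / 2 / 2 ^ (n + 1) / (|M n| + 1)) (1 / 2)

/-- Reality's strategy. -/
noncomputable def Rstrat (a : ℝ) (p M : ℕ → ℝ) (n : ℕ) : ℝ :=
  if p n ≤ 1 / 2 then p n + Rd a M n else p n - Rd a M n

lemma Rd_pos {a : ℝ} (ha : a < 1) (M : ℕ → ℝ) (n : ℕ) : 0 < Rd a M n := by
  have h1 : (0:ℝ) < 1 - a := by linarith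
  have h2 : (0:ℝ) < |M n| + 1 := by positivity
  apply lt_min
  · positivity
  · norm_num

lemma Rd_le_half (a : ℝ) (M : ℕ → ℝ) (n : ℕ) : Rd a M n ≤ 1 / 2 := min_le_right _ _

lemma Rd_mul_le {a : ℝ} (ha : a ≤ 1) (M : ℕ → ℝ) (n : ℕ) :
    |M n| * Rd a M n ≤ (1 - a) / 2 / 2 ^ (n + 1) := by
  set e : ℝ := (1 - a) / 2 / 2 ^ (n + 1) with he
  have he0 : 0 ≤ e := by
    have : (0:ℝ) ≤ 1 - a := by linarith
    positivity
  have h2 : (0:ℝ) < |M n| + 1 := by positivity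
  calc |M n| * Rd a M n ≤ |M n| * (e / (|M n| + 1)) :=
        mul_le_mul_of_nonneg_left (min_le_left _ _) (abs_nonneg _)
    _ = e * (|M n| / (|M n| + 1)) := by ring
    _ ≤ e * 1 := by
        apply mul_le_mul_of_nonneg_left _ he0
        rw [div_le_one h2]; linarith
    _ = e := mul_one e

lemma sum_eps_le {a : ℝ} (ha : a ≤ 1) (n : ℕ) :
    ∑ k ∈ range n, (1 - a) / 2 / 2 ^ (k + 1) ≤ (1 - a) / 2 := by
  have h0 : (0:ℝ) ≤ (1 - a) / 4 := by linarith
  have hterm : ∀ k : ℕ, (1 - a) / 2 / 2 ^ (k + 1) = (1 - a) / 4 * (1/2) ^ k := by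
    intro k
    rw [div_pow, one_pow, pow_succ]
    ring
  calc ∑ k ∈ range n, (1 - a) / 2 / 2 ^ (k + 1)
      = (1 - a) / 4 * ∑ k ∈ range n, (1/2:ℝ) ^ k := by
        rw [Finset.mul_sum]; exact Finset.sum_congr rfl fun k _ => hterm k
    _ ≤ (1 - a) / 4 * 2 := mul_le_mul_of_nonneg_left (sum_geometric_two_le n) h0
    _ = (1 - a) / 2 := by ring

lemma Rstrat_adapted (a : ℝ) : RAdapted (Rstrat a) := by
  intro p p' M M' n hp hM
  unfold Rstrat Rd
  rw [hp n le_rfl, hM n le_rfl]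

lemma Rstrat_mem {a : ℝ} (ha : a < 1) {p : ℕ → ℝ} (hp : ValidP p) (M : ℕ → ℝ) (n : ℕ) :
    Rstrat a p M n ∈ Set.Icc (0:ℝ) 1 := by
  obtain ⟨h0, h1⟩ := hp n
  have hd0 := (Rd_pos ha M n).le
  have hdh := Rd_le_half a M n
  unfold Rstrat
  split
  · constructor <;> [linarith; linarith]
  · constructor <;> [linarith; linarith]

lemma Rstrat_ne {a : ℝ} (ha : a < 1) (p M : ℕ → ℝ) (n : ℕ) :
    Rstrat a p M n ≠ p n := by
  have hd := Rd_pos ha M n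
  unfold Rstrat
  split
  · intro h; linarith [h]
  · intro h; linarith [h]

lemma Rstrat_abs {a : ℝ} (ha : a < 1) (p M : ℕ → ℝ) (n : ℕ) :
    |Rstrat a p M n - p n| = Rd a M n := by
  have hd := (Rd_pos ha M n).le
  unfold Rstrat
  split
  · rw [show p n + Rd a M n - p n = Rd a M n by ring, abs_of_nonneg hd]
  · rw [show p n - Rd a M n - p n = -(Rd a M n) by ring, abs_neg, abs_of_nonneg hd]

lemma cap_bound {a : ℝ} (ha : a < 1) (p M : ℕ → ℝ) (n : ℕ) :
    cap a p M (Rstrat a p M) n ≤ (1 + a) / 2 := by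
  have key : cap a p M (Rstrat a p M) n ≤ a + ∑ k ∈ range n, (1 - a) / 2 / 2 ^ (k + 1) := by
    induction n with
    | zero => simp [cap]
    | succ k ih =>
        have hinc : M k * (Rstrat a p M k - p k) ≤ (1 - a) / 2 / 2 ^ (k + 1) := by
          calc M k * (Rstrat a p M k - p k) ≤ |M k * (Rstrat a p M k - p k)| := le_abs_self _
            _ = |M k| * Rd a M k := by rw [abs_mul, Rstrat_abs ha]
            _ ≤ (1 - a) / 2 / 2 ^ (k + 1) := Rd_mul_le ha.le M k
        rw [Finset.sum_range_succ]
        show cap a p M (Rstrat a p M) k + M k * (Rstrat a p M k - p k) ≤ _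
        linarith
  have := sum_eps_le ha.le n
  linarith

/-- In the bounded forecasting game, the event `E` that `x n = p n` for
infinitely many `n` has `Q̲(E) = 0`: moreover, for every initial capital
`a < 1` there is a Reality strategy always announcing `x n ≠ p n` that keeps
the supremum of the capital strictly below 1 against every Forecaster and
every Skeptic keeping the capital nonnegative. -/
theorem stmt_16 :
    LowerQb (fun p x => {n | x n = p n}.Infinite) = 0 ∧
    ∀ a : ℝ, a < 1 →
      ∃ R, RAdapted R ∧ ∀ p M : ℕ → ℝ, ValidP p →
        (ValidXb (R p M) ∧ ∀ n, R p M n ≠ p n) ∧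
        ((∀ n, 0 ≤ cap a p M (R p M) n) →
          ∃ q : ℝ, q < 1 ∧ ∀ n, cap a p M (R p M) n ≤ q) := by
  have main : ∀ a : ℝ, a < 1 →
      ∃ R, RAdapted R ∧ ∀ p M : ℕ → ℝ, ValidP p →
        (ValidXb (R p M) ∧ ∀ n, R p M n ≠ p n) ∧
        ((∀ n, 0 ≤ cap a p M (R p M) n) →
          ∃ q : ℝ, q < 1 ∧ ∀ n, cap a p M (R p M) n ≤ q) := by
    intro a ha
    refine ⟨Rstrat a, Rstrat_adapted a, fun p M hp => ⟨⟨fun n => Rstrat_mem ha hp M n,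
      fun n => Rstrat_ne ha p M n⟩, fun _ => ⟨(1 + a) / 2, by linarith, cap_bound ha p M⟩⟩⟩
  refine ⟨?_, main⟩
  set F : (ℕ → ℝ) → (ℕ → ℝ) → Prop := fun p x => ¬ {n | x n = p n}.Infinite with hF
  have hmem : ∀ a : ℝ, a < 1 → a ∈ QSetb F := by
    intro a ha
    refine ⟨Rstrat a, Rstrat_adapted a, fun p M hp => ⟨fun n => Rstrat_mem ha hp M n,
      fun _ => ⟨?_, fun n => le_trans (cap_bound ha p M n) (by linarith)⟩⟩⟩
    have : {n | Rstrat a p M n = p n} = ∅ :=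
      Set.eq_empty_of_forall_notMem fun n hn => Rstrat_ne ha p M n hn
    show ¬ {n | Rstrat a p M n = p n}.Infinite
    rw [this]
    exact Set.not_infinite.mpr Set.finite_empty
  have hub : ∀ b ∈ QSetb F, b ≤ 1 := by
    intro b hb
    by_contra hgt
    push_neg at hgt
    obtain ⟨R, _, hR⟩ := hb
    obtain ⟨_, hcap⟩ := hR (fun _ => 1/2) (fun _ => 0) (fun n => by norm_num)
    set X := R (fun _ => 1/2) (fun _ => 0)
    have hc : ∀ n, cap b (fun _ => 1/2) (fun _ => 0) X n = b := by
      intro n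
      induction n with
      | zero => rfl
      | succ k ih => show cap b _ _ X k + 0 * _ = b; rw [ih]; ring
    have := (hcap (fun n => by rw [hc n]; linarith)).2 0
    rw [hc 0] at this
    linarith
  have hsup : sSup (QSetb F) = 1 := by
    apply le_antisymm
    · exact csSup_le ⟨0, hmem 0 one_pos⟩ hub
    · refine le_of_forall_lt fun c hc => ?_
      have h1 : c < (c + 1) / 2 := by linarith
      have h2 : (c + 1) / 2 < 1 := by linarith
      exact lt_of_lt_of_le h1 (le_csSup ⟨1, hub⟩ (hmem _ h2))
  show (1 : ℝ) - UpperQb _ = 0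
  rw [show UpperQb (fun p x => ¬ {n | x n = p n}.Infinite) = sSup (QSetb F) from rfl, hsup]
  ring
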